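/- (Limit circle direction of the degenerate-coefficient criterion.) Let c > 0, let φ : ℝ → ℝ be continuously differentiable on [0,c] with φ(t) > 0 for all t ∈ [0,c], let q : ℝ → ℝ be continuous on [0,c], and set p(t) = t·φ(t). Then every solution u of the Sturm–Liouville equation −(p·u′)′ + q·u = 0 on (0,c) (i.e., u differentiable on (0,c), t ↦ p(t)·(deriv u)(t) differentiable on (0,c), and deriv(t ↦ p(t)·(deriv u)(t))(x) = q(x)·u(x) for all x ∈ (0,c)) satisfies: u² is integrable on (0,c′) for every c′ ∈ (0,c). Hence when p has a simple zero at the endpoint 0, the endpoint 0 is in the limit circle case. -/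

import Mathlib

open MeasureTheory intervalIntegral

lemma primitive_deriv_aux {f : ℝ → ℝ} {a b : ℝ} {s : Set ℝ} (hs : IsOpen s)
    (hfs : ContinuousOn f s) (hb : b ∈ Set.Icc a b) (hsub : Set.Icc a b ⊆ s) :
    ∀ x ∈ Set.Icc a b, HasDerivAt (fun y => ∫ r in y..b, f r) (-(f x)) x := by
  intro x hx
  have hint : IntervalIntegrable f volume b x :=
    (hfs.mono fun z hz => hsub (Set.uIcc_subset_Icc hb hx hz)).intervalIntegrable
  have h1 : HasDerivAt (fun y => ∫ r in b..y, f r) (f x) x :=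
    intervalIntegral.integral_hasDerivAt_right hint
      (hfs.stronglyMeasurableAtFilter hs x (hsub hx))
      (hfs.continuousAt (hs.mem_nhds (hsub hx)))
  have h2 := h1.neg
  have hfe : (fun y => ∫ r in y..b, f r) = -fun y => ∫ r in b..y, f r := by
    funext y
    simp [intervalIntegral.integral_symm b y]
  rw [hfe]
  exact h2

lemma gronwall_bwd {f : ℝ → ℝ} {a b C L : ℝ} (hL : 0 < L) (hab : a ≤ b)
    {s : Set ℝ} (hs : IsOpen s) (hfs : ContinuousOn f s) (hsub : Set.Icc a b ⊆ s)
    (hineq : ∀ t ∈ Set.Icc a b, f t ≤ C + L * ∫ x in t..b, f x) :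
    ∀ t ∈ Set.Icc a b, f t ≤ C * Real.exp (L * (b - t)) := by
  set G : ℝ → ℝ := fun t => ∫ x in t..b, f x with hGdef
  have hbmem : b ∈ Set.Icc a b := Set.right_mem_Icc.2 hab
  have hG : ∀ t ∈ Set.Icc a b, HasDerivAt G (-(f t)) t :=
    primitive_deriv_aux hs hfs hbmem hsub
  set H : ℝ → ℝ := fun t => Real.exp (L * t) * (C / L + G t) with hHdef
  have hH : ∀ t ∈ Set.Icc a b,
      HasDerivAt H (Real.exp (L * t) * (C + L * G t - f t)) t := by
    intro t ht
    have he : HasDerivAt (fun t => Real.exp (L * t)) (Real.exp (L * t) * L) t :=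
      (Real.hasDerivAt_exp (L * t)).comp t ((hasDerivAt_id t).const_mul L) |>.congr_deriv (by ring)
    have hg : HasDerivAt (fun t => C / L + G t) (-(f t)) t := (hG t ht).const_add _
    have := he.mul hg
    refine this.congr_deriv ?_
    have hL' : L ≠ 0 := hL.ne'
    field_simp
    ring
  have hmono : MonotoneOn H (Set.Icc a b) := by
    apply monotoneOn_of_deriv_nonneg (convex_Icc a b)
    · exact fun t ht => ((hH t ht).continuousAt).continuousWithinAt
    · intro t ht
      rw [interior_Icc] at ht
      exact ((hH t (Set.mem_Icc_of_Ioo ht)).differentiableAt).differentiableWithinAt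
    · intro t ht
      rw [interior_Icc] at ht
      rw [(hH t (Set.mem_Icc_of_Ioo ht)).deriv]
      have h1 : f t ≤ C + L * G t := hineq t (Set.mem_Icc_of_Ioo ht)
      exact mul_nonneg (Real.exp_pos _).le (by linarith)
  intro t ht
  have h1 : H t ≤ H b := hmono ht hbmem ht.2
  have hGb : G b = 0 := intervalIntegral.integral_same
  have h2 := hineq t ht
  have hexp : Real.exp (L * t) * Real.exp (L * (b - t)) = Real.exp (L * b) := by
    rw [← Real.exp_add]; ring_nf
  have hept : 0 < Real.exp (L * t) := Real.exp_pos _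
  have hebt : 0 < Real.exp (L * (b - t)) := Real.exp_pos _
  simp only [hHdef, hGb, add_zero] at h1
  have h3 : C / L + G t ≤ Real.exp (L * (b - t)) * (C / L) := by
    rw [← hexp, mul_assoc] at h1
    exact le_of_mul_le_mul_left h1 hept
  have h4 : L * G t ≤ C * Real.exp (L * (b - t)) - C := by
    have := mul_le_mul_of_nonneg_left h3 hL.le
    field_simp at this
    nlinarith
  linarith

lemma iterated_int_bound {f : ℝ → ℝ} {t b : ℝ} (ht : 0 < t) (htb : t ≤ b)
    {s : Set ℝ} (hs : IsOpen s) (hfs : ContinuousOn f s) (hsub : Set.Icc t b ⊆ s)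
    (hfnn : ∀ x ∈ Set.Icc t b, 0 ≤ f x) :
    (∫ x in t..b, (∫ r in x..b, f r)) ≤ ∫ x in t..b, x * f x := by
  set F : ℝ → ℝ := fun x => ∫ r in x..b, f r with hFdef
  have hbmem : b ∈ Set.Icc t b := Set.right_mem_Icc.2 htb
  have hF : ∀ x ∈ Set.Icc t b, HasDerivAt F (-(f x)) x :=
    primitive_deriv_aux hs hfs hbmem hsub
  have hg : ∀ x ∈ Set.uIcc t b, HasDerivAt (fun y => y * F y) (F x - x * f x) x := by
    intro x hx
    rw [Set.uIcc_of_le htb] at hx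
    have := (hasDerivAt_id x).mul (hF x hx)
    refine this.congr_deriv ?_
    simp only [id_eq]
    ring
  have hFcont : ContinuousOn F (Set.Icc t b) :=
    fun x hx => ((hF x hx).continuousAt).continuousWithinAt
  have hfcont : ContinuousOn f (Set.Icc t b) := hfs.mono hsub
  have hint1 : IntervalIntegrable F volume t b := hFcont.intervalIntegrable_of_Icc htb
  have hint2 : IntervalIntegrable (fun x => x * f x) volume t b :=
    (continuousOn_id.mul hfcont).intervalIntegrable_of_Icc htb
  have key := intervalIntegral.integral_eq_sub_of_hasDerivAt hg (hint1.sub hint2)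
  rw [intervalIntegral.integral_sub hint1 hint2] at key
  have hFb : F b = 0 := intervalIntegral.integral_same
  have hFt : 0 ≤ F t := intervalIntegral.integral_nonneg htb hfnn
  have : b * F b - t * F t ≤ 0 := by
    rw [hFb]; nlinarith
  linarith [key, this]

set_option maxHeartbeats 1000000 in
/-- Limit circle direction of the degenerate-coefficient criterion: if
`p(t) = t·φ(t)` with `φ` continuously differentiable and positive on `[0,c]`, then every
solution `u` of the Sturm–Liouville equation `−(p·u')' + q·u = 0` on `(0,c)` is
square-integrable on `(0,c')` for every `c' ∈ (0,c)`; hence the endpoint `0` (a simple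
zero of `p`) is in the limit circle case. -/
theorem limit_circle_of_simple_zero
    (c : ℝ) (hc : 0 < c)
    (φ : ℝ → ℝ)
    (hφ : ContDiffOn ℝ 1 φ (Set.Icc 0 c))
    (hφpos : ∀ t ∈ Set.Icc 0 c, 0 < φ t)
    (q : ℝ → ℝ) (hq : ContinuousOn q (Set.Icc 0 c))
    (p : ℝ → ℝ) (hpdef : ∀ t, p t = t * φ t)
    (u : ℝ → ℝ)
    (hu : ∀ t ∈ Set.Ioo 0 c, DifferentiableAt ℝ u t)
    (hpu : ∀ t ∈ Set.Ioo 0 c, DifferentiableAt ℝ (fun s => p s * deriv u s) t)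
    (heq : ∀ t ∈ Set.Ioo 0 c,
      deriv (fun s => p s * deriv u s) t = q t * u t) :
    ∀ c' ∈ Set.Ioo 0 c, IntegrableOn (fun x => u x ^ 2) (Set.Ioo 0 c') := by
  intro c' hc'
  obtain ⟨hc'0, hc'c⟩ := hc'
  set v : ℝ → ℝ := fun s => p s * deriv u s with hvdef
  have hIoo_sub : Set.Ioo 0 c ⊆ Set.Icc 0 c := Set.Ioo_subset_Icc_self
  have hφc : ContinuousOn φ (Set.Icc 0 c) := hφ.continuousOn
  have hpc : ContinuousOn p (Set.Icc 0 c) :=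
    (continuousOn_id.mul hφc).congr fun t _ => hpdef t
  obtain ⟨t₀, ht₀, hmin⟩ := isCompact_Icc.exists_isMinOn (Set.nonempty_Icc.2 hc.le) hφc
  set m : ℝ := φ t₀ with hmdef
  have hm : 0 < m := hφpos t₀ ht₀
  have hmle : ∀ t ∈ Set.Icc 0 c, m ≤ φ t := fun t ht => hmin ht
  obtain ⟨Q₀, hQ₀⟩ := isCompact_Icc.exists_bound_of_continuousOn hq
  set Q : ℝ := max Q₀ 1 with hQdef
  have hQ1 : (1:ℝ) ≤ Q := le_max_right _ _
  have hQ0 : (0:ℝ) < Q := lt_of_lt_of_le one_pos hQ1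
  have hQb : ∀ t ∈ Set.Icc 0 c, |q t| ≤ Q := fun t ht =>
    le_trans (hQ₀ t ht) (le_max_left _ _)
  have hvcont : ContinuousOn v (Set.Ioo 0 c) :=
    fun t ht => ((hpu t ht).continuousAt).continuousWithinAt
  have hucont : ContinuousOn u (Set.Ioo 0 c) :=
    fun t ht => ((hu t ht).continuousAt).continuousWithinAt
  have hp_pos : ∀ t ∈ Set.Ioo 0 c, 0 < p t := by
    intro t ht
    rw [hpdef]
    exact mul_pos ht.1 (hφpos t (hIoo_sub ht))
  have hderiv_u_eq : ∀ t ∈ Set.Ioo 0 c, deriv u t = v t / p t := by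
    intro t ht
    rw [hvdef]
    field_simp [(hp_pos t ht).ne']
  have hdu_cont : ContinuousOn (deriv u) (Set.Ioo 0 c) :=
    (hvcont.div (hpc.mono hIoo_sub) fun t ht => (hp_pos t ht).ne').congr
      fun t ht => hderiv_u_eq t ht
  have hdv_cont : ContinuousOn (deriv v) (Set.Ioo 0 c) :=
    ((hq.mono hIoo_sub).mul hucont).congr fun t ht => heq t ht
  have hc'mem : c' ∈ Set.Ioo 0 c := ⟨hc'0, hc'c⟩
  set A : ℝ := |u c'| with hAdef
  set B : ℝ := |v c'| with hBdef
  have hA0 : 0 ≤ A := abs_nonneg _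
  have hB0 : 0 ≤ B := abs_nonneg _
  have hsubIcc : ∀ t ∈ Set.Ioc 0 c', Set.Icc t c' ⊆ Set.Ioo 0 c := by
    intro t ht x hx
    exact ⟨lt_of_lt_of_le ht.1 hx.1, lt_of_le_of_lt hx.2 hc'c⟩
  -- FTC bound for u
  have hu_bound : ∀ t ∈ Set.Ioc 0 c',
      |u t| ≤ A + ∫ x in t..c', |v x| / (m * x) := by
    intro t ht
    have hsub := hsubIcc t ht
    have hdui : IntervalIntegrable (deriv u) volume t c' :=
      ((hdu_cont.mono hsub).intervalIntegrable_of_Icc ht.2)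
    have ftc : ∫ x in t..c', deriv u x = u c' - u t := by
      apply intervalIntegral.integral_eq_sub_of_hasDerivAt
      · intro x hx
        rw [Set.uIcc_of_le ht.2] at hx
        exact (hu x (hsub hx)).hasDerivAt
      · exact hdui
    have habs : |∫ x in t..c', deriv u x| ≤ ∫ x in t..c', |v x| / (m * x) := by
      calc |∫ x in t..c', deriv u x| ≤ ∫ x in t..c', |deriv u x| :=
            intervalIntegral.abs_integral_le_integral_abs ht.2
        _ ≤ ∫ x in t..c', |v x| / (m * x) := by
            apply intervalIntegral.integral_mono_on ht.2
            · exact ((hdu_cont.mono hsub).abs).intervalIntegrable_of_Icc ht.2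
            · exact (((hvcont.mono hsub).abs).div
                ((continuous_const.mul continuous_id).continuousOn)
                (fun x hx => (mul_pos hm (lt_of_lt_of_le ht.1 hx.1)).ne')).intervalIntegrable_of_Icc ht.2
            · intro x hx
              have hx' := hsub hx
              rw [hderiv_u_eq x hx', abs_div, abs_of_pos (hp_pos x hx')]
              apply div_le_div_of_nonneg_left (abs_nonneg _) (mul_pos hm hx'.1)
              rw [hpdef]
              calc m * x = x * m := by ring
                _ ≤ x * φ x := mul_le_mul_of_nonneg_left (hmle x (hIoo_sub hx')) hx'.1.le
    have hut : u t = u c' - ∫ x in t..c', deriv u x := by linarith [ftc]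
    calc |u t| = |u c' - ∫ x in t..c', deriv u x| := by rw [← hut]
      _ ≤ |u c'| + |∫ x in t..c', deriv u x| := abs_sub _ _
      _ ≤ A + ∫ x in t..c', |v x| / (m * x) := add_le_add le_rfl habs
  -- FTC bound for v
  have hv_bound : ∀ t ∈ Set.Ioc 0 c',
      |v t| ≤ B + Q * ∫ x in t..c', |u x| := by
    intro t ht
    have hsub := hsubIcc t ht
    have hdvi : IntervalIntegrable (deriv v) volume t c' :=
      ((hdv_cont.mono hsub).intervalIntegrable_of_Icc ht.2)
    have ftc : ∫ x in t..c', deriv v x = v c' - v t := by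
      apply intervalIntegral.integral_eq_sub_of_hasDerivAt
      · intro x hx
        rw [Set.uIcc_of_le ht.2] at hx
        exact (hpu x (hsub hx)).hasDerivAt
      · exact hdvi
    have habs : |∫ x in t..c', deriv v x| ≤ Q * ∫ x in t..c', |u x| := by
      calc |∫ x in t..c', deriv v x| ≤ ∫ x in t..c', |deriv v x| :=
            intervalIntegral.abs_integral_le_integral_abs ht.2
        _ ≤ ∫ x in t..c', Q * |u x| := by
            apply intervalIntegral.integral_mono_on ht.2
            · exact ((hdv_cont.mono hsub).abs).intervalIntegrable_of_Icc ht.2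
            · exact (((hucont.mono hsub).abs).const_smul Q).intervalIntegrable_of_Icc ht.2
            · intro x hx
              have hx' := hsub hx
              rw [heq x hx', abs_mul]
              exact mul_le_mul_of_nonneg_right (hQb x (hIoo_sub hx')) (abs_nonneg _)
        _ = Q * ∫ x in t..c', |u x| := intervalIntegral.integral_const_mul _ _
    have hvt : v t = v c' - ∫ x in t..c', deriv v x := by linarith [ftc]
    calc |v t| = |v c' - ∫ x in t..c', deriv v x| := by rw [← hvt]
      _ ≤ |v c'| + |∫ x in t..c', deriv v x| := abs_sub _ _
      _ ≤ B + Q * ∫ x in t..c', |u x| := add_le_add le_rfl habs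
  -- combined Gronwall-type inequality
  set g : ℝ → ℝ := fun r => |v r| / (m * r) with hgdef
  have hgcont : ContinuousOn g (Set.Ioo 0 c) :=
    (hvcont.abs).div ((continuous_const.mul continuous_id).continuousOn)
      (fun x hx => (mul_pos hm hx.1).ne')
  have hcomb : ∀ t ∈ Set.Ioc 0 c',
      |v t| ≤ (B + Q * A * c') + (Q / m) * ∫ x in t..c', |v x| := by
    intro t ht
    have hsub := hsubIcc t ht
    have h1 := hv_bound t ht
    set F : ℝ → ℝ := fun x => ∫ r in x..c', g r with hFdef
    have hc'memIcc : c' ∈ Set.Icc t c' := Set.right_mem_Icc.2 ht.2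
    have hF : ∀ x ∈ Set.Icc t c', HasDerivAt F (-(g x)) x :=
      primitive_deriv_aux isOpen_Ioo hgcont hc'memIcc hsub
    have hFcont : ContinuousOn F (Set.Icc t c') :=
      fun x hx => ((hF x hx).continuousAt).continuousWithinAt
    have h2 : (∫ x in t..c', |u x|) ≤ ∫ x in t..c', (A + F x) := by
      apply intervalIntegral.integral_mono_on ht.2
      · exact ((hucont.mono hsub).abs).intervalIntegrable_of_Icc ht.2
      · exact (continuousOn_const.add hFcont).intervalIntegrable_of_Icc ht.2
      · intro x hx
        exact hu_bound x ⟨lt_of_lt_of_le ht.1 hx.1, hx.2⟩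
    have h3 : (∫ x in t..c', (A + F x)) = A * (c' - t) + ∫ x in t..c', F x := by
      rw [intervalIntegral.integral_add intervalIntegrable_const
        (hFcont.intervalIntegrable_of_Icc ht.2)]
      simp [mul_comm]
    have h4 : (∫ x in t..c', F x) ≤ ∫ x in t..c', x * g x :=
      iterated_int_bound ht.1 ht.2 isOpen_Ioo hgcont hsub
        (fun x hx => div_nonneg (abs_nonneg _) (mul_pos hm (lt_of_lt_of_le ht.1 hx.1)).le)
    have h5 : (∫ x in t..c', x * g x) = (∫ x in t..c', |v x|) / m := by
      rw [← intervalIntegral.integral_div]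
      apply intervalIntegral.integral_congr
      intro x hx
      rw [Set.uIcc_of_le ht.2] at hx
      have hx0 : 0 < x := lt_of_lt_of_le ht.1 hx.1
      simp only [hgdef]
      field_simp
    have hvint_nonneg : 0 ≤ ∫ x in t..c', |v x| :=
      intervalIntegral.integral_nonneg ht.2 (fun x _ => abs_nonneg _)
    have h6 : (∫ x in t..c', |u x|) ≤ A * c' + (∫ x in t..c', |v x|) / m := by
      have h7 : A * (c' - t) ≤ A * c' := by nlinarith [ht.1, hA0]
      calc (∫ x in t..c', |u x|) ≤ A * (c' - t) + ∫ x in t..c', F x := by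
            rw [← h3]; exact h2
        _ ≤ A * (c' - t) + ∫ x in t..c', x * g x := by linarith [h4]
        _ = A * (c' - t) + (∫ x in t..c', |v x|) / m := by rw [h5]
        _ ≤ A * c' + (∫ x in t..c', |v x|) / m := by linarith
    have h8 := mul_le_mul_of_nonneg_left h6 hQ0.le
    have hm' : m ≠ 0 := hm.ne'
    calc |v t| ≤ B + Q * ∫ x in t..c', |u x| := h1
      _ ≤ B + Q * (A * c' + (∫ x in t..c', |v x|) / m) := by linarith
      _ = (B + Q * A * c') + (Q / m) * ∫ x in t..c', |v x| := by
          field_simp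
          ring
  -- Gronwall: uniform bound on |v|
  set L : ℝ := Q / m with hLdef
  have hL : 0 < L := div_pos hQ0 hm
  set C : ℝ := B + Q * A * c' with hCdef
  have hC0 : 0 ≤ C := by positivity
  set K : ℝ := C * Real.exp (L * c') with hKdef
  have hK0 : 0 ≤ K := mul_nonneg hC0 (Real.exp_pos _).le
  have hK : ∀ t ∈ Set.Ioc 0 c', |v t| ≤ K := by
    intro t ht
    have hgr := gronwall_bwd (f := fun x => |v x|) hL ht.2 isOpen_Ioo
      (hvcont.abs) (hsubIcc t ht)
      (fun x hx => hcomb x ⟨lt_of_lt_of_le ht.1 hx.1, hx.2⟩)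
      t (Set.left_mem_Icc.2 ht.2)
    refine le_trans hgr ?_
    apply mul_le_mul_of_nonneg_left _ hC0
    apply Real.exp_le_exp.2
    nlinarith [ht.1, hL]
  -- logarithmic bound on |u|
  set E : ℝ := K / m with hEdef
  have hE0 : 0 ≤ E := div_nonneg hK0 hm.le
  have huK : ∀ t ∈ Set.Ioc 0 c', |u t| ≤ A + E * Real.log (c' / t) := by
    intro t ht
    have hsub := hsubIcc t ht
    have h1 := hu_bound t ht
    have h2 : (∫ x in t..c', |v x| / (m * x)) ≤ ∫ x in t..c', E * (1 / x) := by
      apply intervalIntegral.integral_mono_on ht.2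
      · exact (((hvcont.mono hsub).abs).div
          ((continuous_const.mul continuous_id).continuousOn)
          (fun x hx => (mul_pos hm (lt_of_lt_of_le ht.1 hx.1)).ne')).intervalIntegrable_of_Icc ht.2
      · apply ContinuousOn.intervalIntegrable_of_Icc ht.2
        exact continuousOn_const.mul (continuousOn_const.div continuousOn_id
          (fun x hx => (lt_of_lt_of_le ht.1 hx.1).ne'))
      · intro x hx
        have hx0 : 0 < x := lt_of_lt_of_le ht.1 hx.1
        have hvx := hK x ⟨hx0, hx.2⟩
        have heq2 : E * (1 / x) = K / (m * x) := by
          rw [hEdef]; field_simp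
        rw [heq2]
        gcongr
    have h3 : (∫ x in t..c', E * (1 / x)) = E * Real.log (c' / t) := by
      have h0 : (0:ℝ) ∉ Set.uIcc t c' := by
        rw [Set.uIcc_of_le ht.2]
        exact fun h => absurd h.1 (not_le.2 ht.1)
      rw [intervalIntegral.integral_const_mul, integral_one_div h0]
    linarith [h1, h2, h3.le, h3.ge]
  -- integrability via domination
  set D₁ : ℝ := 2 * A ^ 2 with hD₁def
  set D₂ : ℝ := 32 * E ^ 2 * c' ^ ((2:ℝ)⁻¹) with hD₂def
  have hD₂0 : 0 ≤ D₂ := by positivity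
  have hg_int : IntegrableOn (fun x => D₁ + D₂ * x ^ (-(2:ℝ)⁻¹ : ℝ)) (Set.Ioo 0 c') := by
    have h1 : IntervalIntegrable (fun x : ℝ => x ^ (-(2:ℝ)⁻¹ : ℝ)) volume 0 c' :=
      intervalIntegrable_rpow' (by norm_num)
    have h2 : IntervalIntegrable (fun x : ℝ => D₁ + D₂ * x ^ (-(2:ℝ)⁻¹ : ℝ)) volume 0 c' :=
      intervalIntegrable_const.add (h1.const_mul D₂)
    have h3 := (intervalIntegrable_iff_integrableOn_Ioc_of_le hc'0.le).1 h2
    exact h3.mono_set Set.Ioo_subset_Ioc_self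
  have hmeas : AEStronglyMeasurable (fun x => u x ^ 2)
      (volume.restrict (Set.Ioo 0 c')) := by
    apply ContinuousOn.aestronglyMeasurable _ measurableSet_Ioo
    exact (hucont.mono (fun x hx => ⟨hx.1, hx.2.trans hc'c⟩)).pow 2
  apply Integrable.mono' hg_int hmeas
  rw [ae_restrict_iff' measurableSet_Ioo]
  filter_upwards with x
  intro hx
  have hx0 : 0 < x := hx.1
  have hy1 : 1 ≤ c' / x := (one_le_div hx0).2 hx.2.le
  have hy0 : 0 < c' / x := lt_of_lt_of_le one_pos hy1
  have hlog0 : 0 ≤ Real.log (c' / x) := Real.log_nonneg hy1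
  have hub := huK x ⟨hx0, hx.2.le⟩
  have hlog : Real.log (c' / x) ≤ (c' / x) ^ ((4:ℝ)⁻¹) / ((4:ℝ)⁻¹) :=
    Real.log_le_rpow_div hy0.le (by norm_num)
  have hlog4 : Real.log (c' / x) ≤ 4 * (c' / x) ^ ((4:ℝ)⁻¹) := by
    have h4 : (c' / x) ^ ((4:ℝ)⁻¹) / ((4:ℝ)⁻¹) = 4 * (c' / x) ^ ((4:ℝ)⁻¹) := by
      rw [div_inv_eq_mul]; ring
    linarith [hlog, h4.le, h4.ge]
  have hrw : ((c' / x) ^ ((4:ℝ)⁻¹)) ^ 2 = (c' / x) ^ ((2:ℝ)⁻¹) := by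
    rw [← Real.rpow_natCast ((c' / x) ^ ((4:ℝ)⁻¹)) 2, ← Real.rpow_mul hy0.le]
    norm_num
  have hr0 : 0 ≤ (c' / x) ^ ((4:ℝ)⁻¹) := Real.rpow_nonneg hy0.le _
  have hsq : (Real.log (c' / x)) ^ 2 ≤ 16 * (c' / x) ^ ((2:ℝ)⁻¹) := by
    nlinarith [hlog4, hlog0, hr0, hrw]
  have hy2 : (c' / x) ^ ((2:ℝ)⁻¹) = c' ^ ((2:ℝ)⁻¹) * x ^ (-(2:ℝ)⁻¹ : ℝ) := by
    rw [Real.div_rpow hc'0.le hx0.le, Real.rpow_neg hx0.le, div_eq_mul_inv]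
  have husq : u x ^ 2 ≤ (A + E * Real.log (c' / x)) ^ 2 := by
    nlinarith [hub, abs_nonneg (u x), sq_abs (u x)]
  have hnorm : ‖u x ^ 2‖ = u x ^ 2 := by
    rw [Real.norm_eq_abs, abs_of_nonneg (sq_nonneg _)]
  rw [hnorm]
  have hfinal : u x ^ 2 ≤ D₁ + D₂ * x ^ (-(2:ℝ)⁻¹ : ℝ) := by
    have h9 : (A + E * Real.log (c' / x)) ^ 2 ≤
        2 * A ^ 2 + 2 * E ^ 2 * (Real.log (c' / x)) ^ 2 := by
      nlinarith [sq_nonneg (A - E * Real.log (c' / x))]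
    have h10 : 2 * E ^ 2 * (Real.log (c' / x)) ^ 2 ≤
        32 * E ^ 2 * (c' / x) ^ ((2:ℝ)⁻¹) := by nlinarith [hsq, sq_nonneg E]
    have h11 : (32 : ℝ) * E ^ 2 * (c' / x) ^ ((2:ℝ)⁻¹) = D₂ * x ^ (-(2:ℝ)⁻¹ : ℝ) := by
      rw [hD₂def, hy2]; ring
    calc u x ^ 2 ≤ (A + E * Real.log (c' / x)) ^ 2 := husq
      _ ≤ 2 * A ^ 2 + 2 * E ^ 2 * (Real.log (c' / x)) ^ 2 := h9
      _ ≤ 2 * A ^ 2 + 32 * E ^ 2 * (c' / x) ^ ((2:ℝ)⁻¹) := by linarith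
      _ = D₁ + D₂ * x ^ (-(2:ℝ)⁻¹ : ℝ) := by rw [hD₁def, h11]
  exact hfinal
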